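/- Consider the RP chain with p = 0 started from a configuration with exactly one vertex in state false, and let T = min{t ≥ 0 : S_t is the constant-false configuration}. Then T has the same distribution as Y_1 + ⋯ + Y_{n−1}, where Y_1, …, Y_{n−1} are independent random variables each geometrically distributed on {1, 2, 3, …} with success probability 2/n (i.e. P(Y = t) = (1 − 2/n)^{t−1}·(2/n) for t ≥ 1); in particular E[T] = n(n−1)/2. -/

import Mathlib

open scoped Classical

/-- A configuration of the `n`-cycle: `true` = cooperate, `false` = defect. -/
abbrev Config (n : ℕ) := ZMod n → Bool

/-- Probability that, when the edge `{i, i+1}` is selected for play, the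
Rational Pavlov update turns configuration `S` into configuration `T`. -/
noncomputable def rpUpdProb (p : ℝ) {n : ℕ} (S : Config n) (i : ZMod n) (T : Config n) : ℝ :=
  if S i = true ∧ S (i + 1) = true then
    (if T = S then 1 else 0)
  else if S i = false ∧ S (i + 1) = false then
    (if ∀ j : ZMod n, j ≠ i → j ≠ i + 1 → T j = S j then
      (if T i = true then p else 1 - p) * (if T (i + 1) = true then p else 1 - p)
    else 0)
  else
    (if T = Function.update (Function.update S i false) (i + 1) false then 1 else 0)

/-- One-step transition probability of the Rational Pavlov chain on the `n`-cycle: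
an edge `{i, i+1}` is chosen uniformly at random and the two players update. -/
noncomputable def rpStepProb (p : ℝ) {n : ℕ} [NeZero n] (S T : Config n) : ℝ :=
  (1 / (n : ℝ)) * ∑ i : ZMod n, rpUpdProb p S i T

/-- Probability that the Rational Pavlov chain started at `S0`, run for `t` steps,
produces a trajectory `σ : Fin (t+1) → Config n` satisfying the event `E`. -/
noncomputable def rpTrajProb (p : ℝ) {n : ℕ} [NeZero n] (S0 : Config n) (t : ℕ)
    (E : (Fin (t + 1) → Config n) → Prop) : ℝ :=
  ∑ σ : Fin (t + 1) → Config n,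
    (if σ 0 = S0 ∧ E σ then ∏ s : Fin t, rpStepProb p (σ s.castSucc) (σ s.succ) else 0)

/-- Probability that the first hitting time of the all-defect configuration equals `t`. -/
noncomputable def rpFirstHitAllDefectProb {n : ℕ} [NeZero n] (p : ℝ) (S0 : Config n)
    (t : ℕ) : ℝ :=
  rpTrajProb p S0 t
    (fun σ => σ (Fin.last t) = (fun _ => false) ∧
      ∀ s : Fin (t + 1), σ s = (fun _ => false) → s = Fin.last t)

/-- Probability that the sum of `n-1` independent geometric random variables on
`{1, 2, 3, …}` with success probability `2/n` equals `t`. -/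
noncomputable def geomSumProb (n t : ℕ) : ℝ :=
  ∑ y : Fin (n - 1) → Fin (t + 1),
    if (∀ i, 1 ≤ (y i : ℕ)) ∧ (∑ i, (y i : ℕ)) = t then
      ∏ i, ((1 - 2 / (n : ℝ)) ^ ((y i : ℕ) - 1) * (2 / (n : ℝ)))
    else 0

/-! ### Auxiliary development -/

/-- The all-defect configuration. -/
def allD (n : ℕ) : Config n := fun _ => false

/-- The deterministic Rational Pavlov update at `p = 0`. -/
noncomputable def rpDet {n : ℕ} (S : Config n) (i : ZMod n) : Config n :=
  if S i = true ∧ S (i + 1) = true then S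
  else Function.update (Function.update S i false) (i + 1) false

lemma upd_both_false {n : ℕ} (S : Config n) (i : ZMod n) (h : S i = false)
    (h1 : S (i + 1) = false) :
    Function.update (Function.update S i false) (i + 1) false = S := by
  funext j
  rcases eq_or_ne j (i + 1) with rfl | hj1
  · rw [Function.update_self, h1]
  · rw [Function.update_of_ne hj1]
    rcases eq_or_ne j i with rfl | hj
    · rw [Function.update_self, h]
    · rw [Function.update_of_ne hj]

lemma rpUpdProb_zero {n : ℕ} [NeZero n] (S : Config n) (i : ZMod n) (T : Config n) :
    rpUpdProb 0 S i T = if T = rpDet S i then 1 else 0 := by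
  cases hSi : S i <;> cases hSi1 : S (i + 1) <;>
    simp only [rpUpdProb, rpDet, hSi, hSi1, false_and, and_false, and_self, if_true, if_false,
      Bool.false_eq_true, Bool.true_eq_false, true_and, and_true]
  · -- both false
    rw [upd_both_false S i hSi hSi1]
    by_cases hT : T = S
    · subst hT
      simp [hSi, hSi1]
    · simp only [hT, if_false]
      by_cases hall : ∀ j : ZMod n, j ≠ i → j ≠ i + 1 → T j = S j
      · have hor : T i = true ∨ T (i + 1) = true := by
          by_contra hc
          push_neg at hc
          obtain ⟨h1, h2⟩ := hc
          simp only [Bool.not_eq_true] at h1 h2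
          apply hT
          funext j
          by_cases hj : j = i
          · subst hj; rw [h1, hSi]
          · by_cases hj1 : j = i + 1
            · subst hj1; rw [h2, hSi1]
            · exact hall j hj hj1
        rcases hor with h | h <;> simp [h, hall]
      · simp [hall]
  · congr!
  · congr!
  · congr!

/-- The arc configuration: defectors occupy `{v - a, …, v + b}` (an arc of `a + b + 1`
vertices), everyone else cooperates. -/
def arcC (n : ℕ) (v : ZMod n) (a b : ℕ) : Config n :=
  fun j => decide ((a : ℕ) + b < ((j - v) + (a : ZMod n)).val)

section Arc

variable {n : ℕ} [NeZero n] (v : ZMod n)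

lemma arc_at (a b x : ℕ) (hx : x < n) :
    arcC n v a b (v - (a : ZMod n) + (x : ZMod n)) = decide (a + b < x) := by
  have : (v - (a : ZMod n) + (x : ZMod n)) - v + (a : ZMod n) = (x : ZMod n) := by ring
  rw [arcC, this, ZMod.val_cast_of_lt hx]

lemma point_inj (a : ℕ) {x y : ℕ} (hx : x < n) (hy : y < n) :
    v - (a : ZMod n) + (x : ZMod n) = v - (a : ZMod n) + (y : ZMod n) ↔ x = y := by
  constructor
  · intro h
    have h2 : (x : ZMod n) = (y : ZMod n) := by
      have := add_left_cancel h
      exact this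
    have := congrArg ZMod.val h2
    rwa [ZMod.val_cast_of_lt hx, ZMod.val_cast_of_lt hy] at this
  · rintro rfl; rfl

lemma point_surj (a : ℕ) (i : ZMod n) :
    ∃ x : ℕ, x < n ∧ i = v - (a : ZMod n) + (x : ZMod n) := by
  refine ⟨(i - v + (a : ZMod n)).val, ZMod.val_lt _, ?_⟩
  rw [ZMod.natCast_rightInverse _]
  ring

lemma arc_allD (a b : ℕ) (h : n - 1 ≤ a + b) : arcC n v a b = allD n := by
  funext j
  have hv := ZMod.val_lt (j - v + (a : ZMod n))
  have : ¬ ((a : ℕ) + b < ((j - v) + (a : ZMod n)).val) := by omega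
  simp [arcC, allD, this]

lemma arc_ne_allD (hn : 3 ≤ n) (a b : ℕ) (h : a + b ≤ n - 2) : arcC n v a b ≠ allD n := by
  intro hEq
  have h1 : n - 1 < n := by omega
  have := congrFun hEq (v - (a : ZMod n) + ((n - 1 : ℕ) : ZMod n))
  rw [arc_at v a b _ h1] at this
  simp only [allD, decide_eq_false_iff_not, not_lt] at this
  omega

end Arc

section ArcDet

variable {n : ℕ} [NeZero n] (v : ZMod n)

lemma cast_succ_pt (a x : ℕ) :
    v - (a : ZMod n) + (x : ZMod n) + 1 = v - (a : ZMod n) + ((x + 1 : ℕ) : ZMod n) := by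
  push_cast
  ring

lemma det_arc_stay (hn : 3 ≤ n) (a b : ℕ) (hab : a + b ≤ n - 2) (x : ℕ) (hx : x < n)
    (hx1 : x ≠ a + b) (hx2 : x ≠ n - 1) :
    rpDet (arcC n v a b) (v - (a : ZMod n) + (x : ZMod n)) = arcC n v a b := by
  set i := v - (a : ZMod n) + (x : ZMod n) with hi
  have hxn : x + 1 < n := by omega
  have hSi : arcC n v a b i = decide (a + b < x) := arc_at v a b x hx
  have hSi1 : arcC n v a b (i + 1) = decide (a + b < x + 1) := by
    rw [hi, cast_succ_pt v a x, arc_at v a b (x + 1) hxn]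
  rcases lt_or_gt_of_ne hx1 with h | h
  · -- x < a + b : both endpoints defect
    have e1 : arcC n v a b i = false := by rw [hSi]; simp; omega
    have e2 : arcC n v a b (i + 1) = false := by rw [hSi1]; simp; omega
    rw [rpDet, if_neg (by simp [e1]), upd_both_false _ _ e1 e2]
  · -- a + b < x : both endpoints cooperate
    have e1 : arcC n v a b i = true := by rw [hSi]; simp; omega
    have e2 : arcC n v a b (i + 1) = true := by rw [hSi1]; simp; omega
    rw [rpDet, if_pos ⟨e1, e2⟩]

lemma det_arc_right (hn : 3 ≤ n) (a b : ℕ) (hab : a + b ≤ n - 2) :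
    rpDet (arcC n v a b) (v - (a : ZMod n) + ((a + b : ℕ) : ZMod n)) = arcC n v a (b + 1) := by
  set i := v - (a : ZMod n) + ((a + b : ℕ) : ZMod n) with hi
  have hx : a + b < n := by omega
  have hxn : a + b + 1 < n := by omega
  have e1 : arcC n v a b i = false := by rw [hi, arc_at v a b _ hx]; simp
  have hi1 : i + 1 = v - (a : ZMod n) + ((a + b + 1 : ℕ) : ZMod n) := cast_succ_pt v a _
  rw [rpDet, if_neg (by simp [e1])]
  funext j
  obtain ⟨y, hy, rfl⟩ := point_surj v a j
  rw [Function.update_apply, Function.update_apply, arc_at v a (b + 1) _ hy]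
  by_cases hy1 : y = a + b + 1
  · subst hy1
    rw [if_pos (by rw [hi1])]
    exact (decide_eq_false (by omega)).symm
  · rw [if_neg (by rw [hi1]; exact fun h => hy1 ((point_inj v a hy hxn).mp h))]
    by_cases hy0 : y = a + b
    · subst hy0
      rw [if_pos (by rw [hi])]
      exact (decide_eq_false (by omega)).symm
    · rw [if_neg (by rw [hi]; exact fun h => hy0 ((point_inj v a hy hx).mp h)),
        arc_at v a b _ hy]
      exact decide_eq_decide.mpr (by omega)

lemma det_arc_left (hn : 3 ≤ n) (a b : ℕ) (hab : a + b ≤ n - 2) :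
    rpDet (arcC n v a b) (v - (a : ZMod n) + ((n - 1 : ℕ) : ZMod n)) = arcC n v (a + 1) b := by
  set i := v - (a : ZMod n) + ((n - 1 : ℕ) : ZMod n) with hi
  have hn1 : n - 1 < n := by omega
  have e1 : arcC n v a b i = true := by rw [hi, arc_at v a b _ hn1]; simp; omega
  have hi1 : i + 1 = v - (a : ZMod n) + ((0 : ℕ) : ZMod n) := by
    rw [hi, cast_succ_pt v a]
    have h2 : n - 1 + 1 = n := by omega
    rw [h2, ZMod.natCast_self, Nat.cast_zero]
  have e2 : arcC n v a b (i + 1) = false := by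
    rw [hi1, arc_at v a b 0 (by omega)]; simp
  rw [rpDet, if_neg (by simp [e2])]
  -- value of `arcC n v (a+1) b` at the point `v - a + z`
  have key : ∀ z : ℕ, arcC n v (a + 1) b (v - (a : ZMod n) + (z : ZMod n)) =
      decide ((a + 1) + b < (((z + 1 : ℕ) : ZMod n)).val) := by
    intro z
    rw [arcC]
    congr 1
    push_cast
    ring
  funext j
  obtain ⟨y, hy, rfl⟩ := point_surj v a j
  rw [Function.update_apply, Function.update_apply, key y]
  by_cases hy0 : y = 0
  · subst hy0
    rw [if_pos (by rw [hi1]), ZMod.val_cast_of_lt (show 0 + 1 < n by omega)]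
    exact (decide_eq_false (by omega)).symm
  · rw [if_neg (by rw [hi1]; exact fun h => hy0 ((point_inj v a hy (by omega)).mp h))]
    by_cases hyt : y = n - 1
    · subst hyt
      rw [if_pos (by rw [hi])]
      have h2 : n - 1 + 1 = n := by omega
      rw [h2, ZMod.natCast_self, ZMod.val_zero]
      exact (decide_eq_false (by omega)).symm
    · rw [if_neg (by rw [hi]; exact fun h => hyt ((point_inj v a hy hn1).mp h)),
        arc_at v a b _ hy, ZMod.val_cast_of_lt (show y + 1 < n by omega)]
      exact decide_eq_decide.mpr (by omega)

end ArcDet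

section Step

variable {n : ℕ} [NeZero n] (v : ZMod n)

lemma sum_reindex (a : ℕ) (g : ZMod n → ℝ) :
    ∑ i : ZMod n, g i = ∑ x ∈ Finset.range n, g (v - (a : ZMod n) + (x : ZMod n)) := by
  rw [eq_comm]
  refine Finset.sum_nbij' (i := fun x => v - (a : ZMod n) + (x : ZMod n))
    (j := fun i => (i - v + (a : ZMod n)).val) ?_ ?_ ?_ ?_ ?_
  · intro x hx; exact Finset.mem_univ _
  · intro i hi; exact Finset.mem_range.mpr (ZMod.val_lt _)
  · intro x hx
    rw [Finset.mem_range] at hx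
    show (v - (a : ZMod n) + (x : ZMod n) - v + (a : ZMod n)).val = x
    have h1 : v - (a : ZMod n) + (x : ZMod n) - v + (a : ZMod n) = (x : ZMod n) := by ring
    rw [h1, ZMod.val_cast_of_lt hx]
  · intro i hi
    show v - (a : ZMod n) + ((((i - v + (a : ZMod n)).val : ℕ)) : ZMod n) = i
    rw [ZMod.natCast_rightInverse _]
    ring
  · intro x hx; rfl

lemma step_arc (hn : 3 ≤ n) (a b : ℕ) (hab : a + b ≤ n - 2) (T : Config n) :
    rpStepProb 0 (arcC n v a b) T =
      (1 / (n : ℝ)) * ((if T = arcC n v (a + 1) b then 1 else 0) +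
        ((if T = arcC n v a (b + 1) then 1 else 0) +
          ((n : ℝ) - 2) * (if T = arcC n v a b then 1 else 0))) := by
  rw [rpStepProb]
  congr 1
  have hmem : ({n - 1, a + b} : Finset ℕ) ⊆ Finset.range n := by
    intro x hx
    simp only [Finset.mem_insert, Finset.mem_singleton] at hx
    rcases hx with rfl | rfl <;> (rw [Finset.mem_range]; omega)
  have hne : n - 1 ≠ a + b := by omega
  have hcast : ((n - 2 : ℕ) : ℝ) = (n : ℝ) - 2 := by
    have h2 : (2 : ℕ) ≤ n := by omega
    push_cast [Nat.cast_sub h2]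
    ring
  calc ∑ i : ZMod n, rpUpdProb 0 (arcC n v a b) i T
      = ∑ i : ZMod n, (if T = rpDet (arcC n v a b) i then (1:ℝ) else 0) :=
        Finset.sum_congr rfl (fun i _ => rpUpdProb_zero _ i T)
    _ = ∑ x ∈ Finset.range n,
          (if T = rpDet (arcC n v a b) (v - (a : ZMod n) + (x : ZMod n)) then (1:ℝ) else 0) :=
        sum_reindex v a _
    _ = (∑ x ∈ Finset.range n \ {n - 1, a + b},
          (if T = rpDet (arcC n v a b) (v - (a : ZMod n) + (x : ZMod n)) then (1:ℝ) else 0)) +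
        ∑ x ∈ ({n - 1, a + b} : Finset ℕ),
          (if T = rpDet (arcC n v a b) (v - (a : ZMod n) + (x : ZMod n)) then (1:ℝ) else 0) :=
        (Finset.sum_sdiff hmem).symm
    _ = (∑ x ∈ Finset.range n \ {n - 1, a + b}, (if T = arcC n v a b then (1:ℝ) else 0)) +
        ((if T = arcC n v (a + 1) b then (1:ℝ) else 0) +
          (if T = arcC n v a (b + 1) then (1:ℝ) else 0)) := by
        rw [Finset.sum_pair hne, det_arc_left v hn a b hab, det_arc_right v hn a b hab]
        congr 1
        refine Finset.sum_congr rfl ?_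
        intro x hx
        simp only [Finset.mem_sdiff, Finset.mem_range, Finset.mem_insert, Finset.mem_singleton,
          not_or] at hx
        rw [det_arc_stay v hn a b hab x hx.1 hx.2.2 hx.2.1]
    _ = (if T = arcC n v (a + 1) b then 1 else 0) +
        ((if T = arcC n v a (b + 1) then 1 else 0) +
          ((n : ℝ) - 2) * (if T = arcC n v a b then 1 else 0)) := by
        rw [Finset.sum_const, Finset.card_sdiff_of_subset hmem, Finset.card_range, Finset.card_pair hne,
          nsmul_eq_mul, hcast]
        ring

lemma det_allD (i : ZMod n) : rpDet (allD n) i = allD n := by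
  rw [rpDet, if_neg (by simp [allD]), upd_both_false _ _ rfl rfl]

lemma step_allD (T : Config n) :
    rpStepProb 0 (allD n) T = if T = allD n then 1 else 0 := by
  rw [rpStepProb]
  have hn0 : (n : ℝ) ≠ 0 := Nat.cast_ne_zero.mpr (NeZero.ne n)
  have hsum : ∑ i : ZMod n, rpUpdProb 0 (allD n) i T
      = ∑ _i : ZMod n, (if T = allD n then (1:ℝ) else 0) := by
    refine Finset.sum_congr rfl ?_
    intro i _
    rw [rpUpdProb_zero, det_allD]
  rw [hsum, Finset.sum_const, Finset.card_univ, ZMod.card, nsmul_eq_mul]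
  field_simp

end Step

section Traj

variable {n : ℕ} [NeZero n]

/-- Splitting off the first entry of a tuple. -/
def consEquiv' (m : ℕ) (β : Type) : (β × (Fin m → β)) ≃ (Fin (m + 1) → β) where
  toFun p := Fin.cons p.1 p.2
  invFun f := (f 0, fun i => f i.succ)
  left_inv p := by
    refine Prod.ext ?_ ?_
    · simp
    · funext i; simp
  right_inv f := Fin.cons_self_tail f

lemma consEquiv'_apply (m : ℕ) (β : Type) (a : β) (g : Fin m → β) :
    consEquiv' m β (a, g) = Fin.cons a g := rfl

lemma fh_zero (S : Config n) :
    rpFirstHitAllDefectProb 0 S 0 = if S = allD n then 1 else 0 := by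
  rw [rpFirstHitAllDefectProb, rpTrajProb]
  rw [Finset.sum_eq_single (fun _ => S : Fin 1 → Config n)]
  · by_cases hS : S = allD n
    · rw [if_pos ⟨rfl, hS, fun s _ => Fin.ext (by omega)⟩, if_pos hS]
      simp
    · rw [if_neg, if_neg hS]
      rintro ⟨-, h2, -⟩
      exact hS h2
  · intro σ _ hσ
    have h0 : ¬ (σ 0 = S) := by
      intro h
      refine hσ (funext fun s => ?_)
      have hs0 : s = (0 : Fin 1) := Fin.ext (by omega)
      rw [hs0, h]
    rw [if_neg (fun hc => h0 hc.1)]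
  · intro h; exact absurd (Finset.mem_univ _) h

lemma fh_allD_succ (t : ℕ) : rpFirstHitAllDefectProb 0 (allD n) (t + 1) = 0 := by
  rw [rpFirstHitAllDefectProb, rpTrajProb]
  refine Finset.sum_eq_zero ?_
  intro σ _
  rw [if_neg]
  rintro ⟨h0, -, hlast⟩
  have h00 : σ 0 = (fun _ => false) := h0
  exact (Fin.last_pos).ne (hlast 0 h00)

lemma fh_succ (S : Config n) (hS : S ≠ allD n) (t : ℕ) :
    rpFirstHitAllDefectProb 0 S (t + 1) =
      ∑ T : Config n, rpStepProb 0 S T * rpFirstHitAllDefectProb 0 T t := by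
  rw [rpFirstHitAllDefectProb, rpTrajProb]
  rw [← Equiv.sum_comp (consEquiv' (t + 1) (Config n))]
  rw [Fintype.sum_prod_type]
  trans (∑ c : Config n, ∑ g : Fin (t + 1) → Config n,
      (if c = S then
        (if g (Fin.last t) = (fun _ => false) ∧
            (∀ j : Fin (t + 1), g j = (fun _ => false) → j = Fin.last t) then
          rpStepProb 0 S (g 0) * ∏ j : Fin t, rpStepProb 0 (g j.castSucc) (g j.succ)
        else 0)
      else 0))
  · refine Finset.sum_congr rfl fun c _ => Finset.sum_congr rfl fun g _ => ?_
    rw [consEquiv'_apply]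
    have hprod : (∏ s : Fin (t + 1), rpStepProb 0
        ((Fin.cons c g : Fin (t + 1 + 1) → Config n) s.castSucc)
        ((Fin.cons c g : Fin (t + 1 + 1) → Config n) s.succ)) =
        rpStepProb 0 c (g 0) * ∏ j : Fin t, rpStepProb 0 (g j.castSucc) (g j.succ) := by
      rw [Fin.prod_univ_succ]
      congr 1
    by_cases hc : c = S
    · subst hc
      rw [if_pos rfl]
      have hiff : ((Fin.cons c g : Fin (t + 1 + 1) → Config n) 0 = c ∧
          ((Fin.cons c g : Fin (t + 1 + 1) → Config n) (Fin.last (t + 1)) = (fun _ => false) ∧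
          ∀ s : Fin (t + 1 + 1), (Fin.cons c g : Fin (t + 1 + 1) → Config n) s = (fun _ => false) →
            s = Fin.last (t + 1))) ↔
          (g (Fin.last t) = (fun _ => false) ∧
            (∀ j : Fin (t + 1), g j = (fun _ => false) → j = Fin.last t)) := by
        rw [← Fin.succ_last, Fin.cons_succ]
        constructor
        · rintro ⟨-, h2, h3⟩
          refine ⟨h2, ?_⟩
          intro j hj
          have := h3 j.succ (by rwa [Fin.cons_succ])
          exact Fin.succ_injective _ this
        · rintro ⟨h2, h3⟩
          refine ⟨rfl, h2, ?_⟩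
          intro s hs
          induction s using Fin.cases with
          | zero =>
            rw [Fin.cons_zero] at hs
            exact absurd hs hS
          | succ j =>
            rw [Fin.cons_succ] at hs
            rw [h3 j hs]
      by_cases hE : (g (Fin.last t) = (fun _ => false) ∧
          (∀ j : Fin (t + 1), g j = (fun _ => false) → j = Fin.last t))
      · rw [if_pos hE, if_pos (hiff.mpr hE), hprod]
      · rw [if_neg hE, if_neg (fun hcond => hE (hiff.mp hcond))]
    · rw [if_neg hc, if_neg]
      rintro ⟨h0, -⟩
      rw [Fin.cons_zero] at h0
      exact hc h0
  rw [Finset.sum_eq_single S]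
  rotate_left
  · intro c _ hc
    exact Finset.sum_eq_zero fun g _ => by rw [if_neg hc]
  · intro h; exact absurd (Finset.mem_univ _) h
  trans (∑ T : Config n, ∑ g : Fin (t + 1) → Config n,
      (if g 0 = T ∧ (g (Fin.last t) = (fun _ => false) ∧
          ∀ j : Fin (t + 1), g j = (fun _ => false) → j = Fin.last t) then
        rpStepProb 0 S T * ∏ j : Fin t, rpStepProb 0 (g j.castSucc) (g j.succ)
      else 0))
  · refine Eq.trans ?_ Finset.sum_comm
    refine Finset.sum_congr rfl fun g _ => ?_
    rw [if_pos rfl]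
    rw [Finset.sum_eq_single (g 0)]
    · by_cases hE : (g (Fin.last t) = (fun _ => false) ∧
          (∀ j : Fin (t + 1), g j = (fun _ => false) → j = Fin.last t))
      · rw [if_pos hE, if_pos ⟨rfl, hE⟩]
      · rw [if_neg hE, if_neg (fun hc => hE hc.2)]
    · intro T _ hT
      rw [if_neg (fun hc => hT hc.1.symm)]
    · intro h; exact absurd (Finset.mem_univ _) h
  · refine Finset.sum_congr rfl fun T _ => ?_
    rw [rpFirstHitAllDefectProb, rpTrajProb, Finset.mul_sum]
    refine Finset.sum_congr rfl fun g _ => ?_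
    by_cases hc : (g 0 = T ∧ (g (Fin.last t) = (fun _ => false) ∧
        ∀ j : Fin (t + 1), g j = (fun _ => false) → j = Fin.last t))
    · rw [if_pos hc, if_pos hc]
    · rw [if_neg hc, if_neg hc, mul_zero]

end Traj

/-- Negative-binomial first-passage law: the probability that a sum of `m` independent
geometric(`2/n`) variables equals `t`. -/
noncomputable def Phi (n : ℕ) (m : ℕ) : ℕ → ℝ
  | 0 => 0
  | t + 1 => (t.choose (m - 1) : ℝ) * (2 / (n : ℝ)) ^ m * (((n : ℝ) - 2) / (n : ℝ)) ^ (t - (m - 1))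

section PhiLemmas

variable {n : ℕ}

lemma Phi_rec (hn : 3 ≤ n) (m : ℕ) (hm : 1 ≤ m) (t : ℕ) :
    Phi n (m + 1) (t + 1) =
      (1 / (n : ℝ)) * (Phi n m t + (Phi n m t + ((n : ℝ) - 2) * Phi n (m + 1) t)) := by
  have hn0 : (n : ℝ) ≠ 0 := by
    have h : 0 < n := by omega
    exact_mod_cast h.ne'
  cases t with
  | zero =>
    have h1 : Nat.choose 0 m = 0 := by
      rw [Nat.choose_eq_zero_iff]
      omega
    simp [Phi, h1]
  | succ t =>
    simp only [Phi, Nat.add_sub_cancel]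
    rcases lt_trichotomy t (m - 1) with h | h | h
    · have c1 : (t + 1).choose m = 0 := by rw [Nat.choose_eq_zero_iff]; omega
      have c2 : t.choose (m - 1) = 0 := by rw [Nat.choose_eq_zero_iff]; omega
      have c3 : t.choose m = 0 := by rw [Nat.choose_eq_zero_iff]; omega
      rw [c1, c2, c3]
      simp
    · have c3 : t.choose m = 0 := by rw [Nat.choose_eq_zero_iff]; omega
      have c1 : (t + 1).choose m = 1 := by
        have ht : t + 1 = m := by omega
        rw [ht, Nat.choose_self]
      have c2 : t.choose (m - 1) = 1 := by rw [h, Nat.choose_self]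
      have e1 : t + 1 - m = 0 := by omega
      have e2 : t - (m - 1) = 0 := by omega
      rw [c1, c2, c3, e1, e2]
      rw [pow_succ]
      generalize (2 / (n : ℝ))^m = Q
      field_simp
      ring
    · have hpascal : ((t + 1).choose m : ℝ) = (t.choose (m - 1) : ℝ) + (t.choose m : ℝ) := by
        have hp : (t + 1).choose m = t.choose (m - 1) + t.choose m := by
          have hm1 : m = (m - 1) + 1 := by omega
          rw [hm1]
          exact Nat.choose_succ_succ t (m - 1)
        exact_mod_cast congrArg (Nat.cast : ℕ → ℝ) hp
      have e1 : t + 1 - m = (t - m) + 1 := by omega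
      have e2 : t - (m - 1) = (t - m) + 1 := by omega
      rw [hpascal, e1, e2]
      rw [pow_succ, pow_succ]
      generalize (((n : ℝ) - 2) / (n : ℝ))^(t - m) = S
      generalize (2 / (n : ℝ))^m = Q
      field_simp
      ring

lemma Phi_one_rec (hn : 3 ≤ n) (t : ℕ) :
    Phi n 1 (t + 1) = (1 / (n : ℝ)) * ((if t = 0 then (1:ℝ) else 0) +
      ((if t = 0 then (1:ℝ) else 0) + ((n : ℝ) - 2) * Phi n 1 t)) := by
  have hn0 : (n : ℝ) ≠ 0 := by
    have h : 0 < n := by omega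
    exact_mod_cast h.ne'
  cases t with
  | zero =>
    show (Nat.choose 0 0 : ℝ) * (2 / (n : ℝ)) ^ 1 * (((n : ℝ) - 2) / (n : ℝ)) ^ (0 - 0) =
      (1 / (n : ℝ)) * ((if (0:ℕ) = 0 then (1:ℝ) else 0) +
        ((if (0:ℕ) = 0 then (1:ℝ) else 0) + ((n : ℝ) - 2) * 0))
    rw [if_pos rfl]
    norm_num
    ring
  | succ t =>
    show (Nat.choose (t+1) 0 : ℝ) * (2 / (n : ℝ)) ^ 1 * (((n : ℝ) - 2) / (n : ℝ)) ^ (t + 1 - 0) =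
      (1 / (n : ℝ)) * ((if t + 1 = 0 then (1:ℝ) else 0) +
        ((if t + 1 = 0 then (1:ℝ) else 0) + ((n : ℝ) - 2) *
          ((Nat.choose t 0 : ℝ) * (2 / (n : ℝ)) ^ 1 * (((n : ℝ) - 2) / (n : ℝ)) ^ (t - 0))))
    rw [if_neg (Nat.succ_ne_zero t), Nat.choose_zero_right, Nat.choose_zero_right,
      Nat.sub_zero, Nat.sub_zero, pow_succ]
    simp only [div_pow]
    field_simp
    ring

end PhiLemmas

section ChainInduction

variable {n : ℕ} [NeZero n]

lemma fh_allD (t : ℕ) :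
    rpFirstHitAllDefectProb 0 (allD n) t = if t = 0 then 1 else 0 := by
  cases t with
  | zero => rw [fh_zero, if_pos rfl, if_pos rfl]
  | succ t => rw [fh_allD_succ, if_neg (Nat.succ_ne_zero t)]

lemma sum_step_mul (hn : 3 ≤ n) (v : ZMod n) (a b : ℕ) (hab : a + b ≤ n - 2)
    (f : Config n → ℝ) :
    ∑ T : Config n, rpStepProb 0 (arcC n v a b) T * f T =
      (1 / (n : ℝ)) * (f (arcC n v (a + 1) b) +
        (f (arcC n v a (b + 1)) + ((n : ℝ) - 2) * f (arcC n v a b))) := by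
  have h1 : ∀ T : Config n, rpStepProb 0 (arcC n v a b) T * f T =
      (1 / (n : ℝ)) * (((if T = arcC n v (a + 1) b then f T else 0) +
        ((if T = arcC n v a (b + 1) then f T else 0) +
          ((n : ℝ) - 2) * (if T = arcC n v a b then f T else 0)))) := by
    intro T
    rw [step_arc v hn a b hab T]
    simp only [mul_assoc, add_mul, ite_mul, one_mul, zero_mul]
  rw [Finset.sum_congr rfl (fun T _ => h1 T), ← Finset.mul_sum]
  congr 1
  rw [Finset.sum_add_distrib, Finset.sum_add_distrib, ← Finset.mul_sum]
  rw [Finset.sum_ite_eq' Finset.univ (arcC n v (a + 1) b) f,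
    Finset.sum_ite_eq' Finset.univ (arcC n v a (b + 1)) f,
    Finset.sum_ite_eq' Finset.univ (arcC n v a b) f]
  simp

lemma fh_arc (hn : 3 ≤ n) (v : ZMod n) :
    ∀ m, 1 ≤ m → ∀ a b, a + b + m = n - 1 → ∀ t,
      rpFirstHitAllDefectProb 0 (arcC n v a b) t = Phi n m t := by
  intro m
  induction m with
  | zero => omega
  | succ m IH =>
    intro _ a b habm
    have hab : a + b ≤ n - 2 := by omega
    have hne : arcC n v a b ≠ allD n := arc_ne_allD v hn a b hab
    intro t
    induction t with
    | zero =>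
      rw [fh_zero, if_neg hne]
      rfl
    | succ t IHt =>
      rw [fh_succ _ hne t, sum_step_mul hn v a b hab]
      rcases Nat.eq_zero_or_pos m with rfl | hm
      · -- m + 1 = 1 : both grown arcs are all-defect
        have hL : arcC n v (a + 1) b = allD n := arc_allD v _ _ (by omega)
        have hR : arcC n v a (b + 1) = allD n := arc_allD v _ _ (by omega)
        rw [hL, hR, fh_allD, IHt, Phi_one_rec hn]
      · have hL : rpFirstHitAllDefectProb 0 (arcC n v (a + 1) b) t = Phi n m t :=
          IH hm (a + 1) b (by omega) t
        have hR : rpFirstHitAllDefectProb 0 (arcC n v a (b + 1)) t = Phi n m t :=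
          IH hm a (b + 1) (by omega) t
        rw [hL, hR, IHt, Phi_rec hn m hm t]

end ChainInduction

section GeomSide

lemma geomAux (x r : ℝ) : ∀ (m : ℕ), 1 ≤ m → ∀ (B t : ℕ), t ≤ B →
    (∑ y : Fin m → Fin (B + 1), if (∀ i, 1 ≤ (y i : ℕ)) ∧ (∑ i, (y i : ℕ)) = t then
      ∏ i, (x ^ ((y i : ℕ) - 1) * r) else 0) =
    if m ≤ t then (((t - 1).choose (m - 1) : ℕ) : ℝ) * r ^ m * x ^ (t - m) else 0 := by
  intro m
  induction m with
  | zero => omega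
  | succ m IH =>
    intro _ B t htB
    rcases Nat.eq_zero_or_pos m with rfl | hm
    · -- base case m = 1
      by_cases ht : 1 ≤ t
      · rw [if_pos ht]
        rw [Finset.sum_eq_single (fun _ => (⟨t, by omega⟩ : Fin (B + 1)) : Fin 1 → Fin (B + 1))]
        · rw [if_pos ⟨fun i => ht, by rw [Fin.sum_univ_one]⟩, Fin.prod_univ_one]
          simp only [Nat.choose_zero_right, Nat.cast_one, pow_one, Nat.sub_self]
          ring
        · intro y _ hy
          rw [if_neg]
          rintro ⟨h1, h2⟩
          refine hy (funext fun i => ?_)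
          have hi0 : i = 0 := Fin.ext (by omega)
          rw [Fin.sum_univ_one] at h2
          rw [hi0]
          exact Fin.ext (by simpa using h2)
        · intro h; exact absurd (Finset.mem_univ _) h
      · rw [if_neg (by omega)]
        refine Finset.sum_eq_zero fun y _ => ?_
        rw [if_neg]
        rintro ⟨h1, h2⟩
        rw [Fin.sum_univ_one] at h2
        have := h1 0
        omega
    · -- inductive step
      rw [← Equiv.sum_comp (consEquiv' m (Fin (B + 1)))]
      rw [Fintype.sum_prod_type]
      trans (∑ c : Fin (B + 1), if 1 ≤ (c : ℕ) ∧ (c : ℕ) ≤ t then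
          (x ^ ((c : ℕ) - 1) * r) * (if m ≤ t - (c : ℕ) then
            (((t - (c : ℕ) - 1).choose (m - 1) : ℕ) : ℝ) * r ^ m * x ^ (t - (c : ℕ) - m)
          else 0) else 0)
      · refine Finset.sum_congr rfl fun c _ => ?_
        by_cases hc : 1 ≤ (c : ℕ) ∧ (c : ℕ) ≤ t
        · rw [if_pos hc]
          have htc : t - (c : ℕ) ≤ B := by omega
          rw [← IH hm B (t - (c : ℕ)) htc, Finset.mul_sum]
          refine Finset.sum_congr rfl fun g _ => ?_
          rw [consEquiv'_apply]
          by_cases hgood : (∀ i, 1 ≤ ((g i : Fin (B + 1)) : ℕ)) ∧ (∑ i, ((g i : Fin (B+1)) : ℕ)) = t - (c : ℕ)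
          · rw [if_pos hgood]
            rw [if_pos ?side]
            case side =>
              constructor
              · intro i
                induction i using Fin.cases with
                | zero => simpa using hc.1
                | succ j => simpa using hgood.1 j
              · rw [Fin.sum_univ_succ]
                simp only [Fin.cons_zero, Fin.cons_succ]
                omega
            rw [Fin.prod_univ_succ]
            simp only [Fin.cons_zero, Fin.cons_succ]
          · rw [if_neg hgood, if_neg, mul_zero]
            rintro ⟨hall, hsum⟩
            rw [Fin.sum_univ_succ] at hsum
            simp only [Fin.cons_zero, Fin.cons_succ] at hsum
            refine hgood ⟨fun i => by simpa using hall i.succ, by omega⟩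
        · rw [if_neg hc]
          refine Finset.sum_eq_zero fun g _ => ?_
          rw [consEquiv'_apply]
          rw [if_neg]
          rintro ⟨hall, hsum⟩
          rw [Fin.sum_univ_succ] at hsum
          simp only [Fin.cons_zero, Fin.cons_succ] at hsum
          have h0 : 1 ≤ (c : ℕ) := by simpa using hall 0
          exact hc ⟨h0, by omega⟩
      trans (∑ k ∈ Finset.range (B + 1), if 1 ≤ k ∧ k ≤ t then
          (x ^ (k - 1) * r) * (if m ≤ t - k then
            (((t - k - 1).choose (m - 1) : ℕ) : ℝ) * r ^ m * x ^ (t - k - m)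
          else 0) else 0)
      · exact Fin.sum_univ_eq_sum_range (fun k => if 1 ≤ k ∧ k ≤ t then
          (x ^ (k - 1) * r) * (if m ≤ t - k then
            (((t - k - 1).choose (m - 1) : ℕ) : ℝ) * r ^ m * x ^ (t - k - m)
          else 0) else 0) (B + 1)
      trans (∑ k ∈ Finset.Icc 1 (t - m), if 1 ≤ k ∧ k ≤ t then
          (x ^ (k - 1) * r) * (if m ≤ t - k then
            (((t - k - 1).choose (m - 1) : ℕ) : ℝ) * r ^ m * x ^ (t - k - m)
          else 0) else 0)
      · refine (Finset.sum_subset ?_ ?_).symm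
        · intro k hk
          rw [Finset.mem_Icc] at hk
          rw [Finset.mem_range]
          omega
        · intro k hkr hk
          rw [Finset.mem_Icc] at hk
          by_cases h1 : 1 ≤ k ∧ k ≤ t
          · rw [if_pos h1, if_neg (by omega), mul_zero]
          · rw [if_neg h1]
      trans (∑ k ∈ Finset.Icc 1 (t - m),
          (((t - k - 1).choose (m - 1) : ℕ) : ℝ) * (r ^ (m + 1) * x ^ (t - (m + 1))))
      · refine Finset.sum_congr rfl fun k hk => ?_
        rw [Finset.mem_Icc] at hk
        have hx : x ^ (k - 1) * x ^ (t - k - m) = x ^ (t - (m + 1)) := by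
          rw [← pow_add]
          congr 1
          omega
        rw [if_pos (by omega : 1 ≤ k ∧ k ≤ t), if_pos (by omega : m ≤ t - k), ← hx]
        ring
      rw [← Finset.sum_mul, ← Nat.cast_sum]
      by_cases hmt : m + 1 ≤ t
      · rw [if_pos hmt]
        have hsum : ∑ k ∈ Finset.Icc 1 (t - m), (t - k - 1).choose (m - 1)
            = (t - 1).choose m := by
          have hre : ∑ k ∈ Finset.Icc 1 (t - m), (t - k - 1).choose (m - 1)
              = ∑ j ∈ Finset.Icc (m - 1) (t - 2), j.choose (m - 1) := by
            refine Finset.sum_nbij' (i := fun k => t - k - 1) (j := fun j => t - j - 1)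
              ?_ ?_ ?_ ?_ ?_
            · intro k hk
              rw [Finset.mem_Icc] at hk ⊢
              omega
            · intro j hj
              rw [Finset.mem_Icc] at hj ⊢
              omega
            · intro k hk
              rw [Finset.mem_Icc] at hk
              omega
            · intro j hj
              rw [Finset.mem_Icc] at hj
              omega
            · intro k hk
              rfl
          rw [hre, Nat.sum_Icc_choose]
          congr 1 <;> omega
        rw [hsum, Nat.add_sub_cancel]
        ring
      · rw [if_neg hmt]
        have h0 : t - m = 0 := by omega
        rw [h0, Finset.Icc_eq_empty (by omega), Finset.sum_empty]
        simp

end GeomSide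

section Final

variable {n : ℕ} [NeZero n]

lemma geom_eq_Phi (hn : 3 ≤ n) (t : ℕ) : geomSumProb n t = Phi n (n - 1) t := by
  have hn0 : (n : ℝ) ≠ 0 := by
    have h : 0 < n := by omega
    exact_mod_cast h.ne'
  have hm : 1 ≤ n - 1 := by omega
  rw [geomSumProb, geomAux (1 - 2 / (n : ℝ)) (2 / (n : ℝ)) (n - 1) hm t t le_rfl]
  have hx : (1 : ℝ) - 2 / (n : ℝ) = ((n : ℝ) - 2) / (n : ℝ) := by field_simp
  rw [hx]
  cases t with
  | zero =>
    rw [if_neg (by omega)]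
    rfl
  | succ t =>
    by_cases h : n - 1 ≤ t + 1
    · rw [if_pos h]
      show _ = (t.choose ((n - 1) - 1) : ℝ) * (2 / (n : ℝ)) ^ (n - 1) *
        (((n : ℝ) - 2) / (n : ℝ)) ^ (t - ((n - 1) - 1))
      rw [Nat.add_sub_cancel]
      rw [show t + 1 - (n - 1) = t - ((n - 1) - 1) from by omega]
    · rw [if_neg h]
      show (0 : ℝ) = (t.choose ((n - 1) - 1) : ℝ) * (2 / (n : ℝ)) ^ (n - 1) *
        (((n : ℝ) - 2) / (n : ℝ)) ^ (t - ((n - 1) - 1))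
      rw [Nat.choose_eq_zero_of_lt (by omega)]
      simp

lemma S0_eq_arc (S0 : Config n) (hS0 : ∃! i : ZMod n, S0 i = false) :
    ∃ v : ZMod n, S0 = arcC n v 0 0 := by
  obtain ⟨v, hv, huniq⟩ := hS0
  refine ⟨v, funext fun j => ?_⟩
  have harc : arcC n v 0 0 j = decide (0 < (j - v).val) := by
    rw [arcC]
    norm_num
  rw [harc]
  by_cases hj : j = v
  · subst hj
    rw [hv]
    simp
  · have hS : S0 j = true := by
      cases hSj : S0 j with
      | false => exact absurd (huniq j hSj) hj
      | true => rfl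
    rw [hS, eq_comm, decide_eq_true_eq]
    have hsub : j - v ≠ 0 := sub_ne_zero.mpr hj
    have : (j - v).val ≠ 0 := fun h => hsub ((ZMod.val_eq_zero _).mp h)
    omega

lemma fh_eq_Phi (hn : 3 ≤ n) (S0 : Config n) (hS0 : ∃! i : ZMod n, S0 i = false) (t : ℕ) :
    rpFirstHitAllDefectProb 0 S0 t = Phi n (n - 1) t := by
  obtain ⟨v, rfl⟩ := S0_eq_arc S0 hS0
  exact fh_arc hn v (n - 1) (by omega) 0 0 (by omega) t

lemma tsum_Phi (hn : 3 ≤ n) :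
    ∑' t : ℕ, (t : ℝ) * Phi n (n - 1) t = (n : ℝ) * ((n : ℝ) - 1) / 2 := by
  have hn0 : (n : ℝ) ≠ 0 := by
    have h : 0 < n := by omega
    exact_mod_cast h.ne'
  have hn2 : (2 : ℝ) ≤ (n : ℝ) := by exact_mod_cast (by omega : 2 ≤ n)
  set K := n - 1 with hK
  have hKn : (K : ℝ) = (n : ℝ) - 1 := by
    rw [hK]
    push_cast [Nat.cast_sub (by omega : 1 ≤ n)]
    ring
  have hK2 : 2 ≤ K := by omega
  set xx : ℝ := ((n : ℝ) - 2) / (n : ℝ) with hxx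
  have hnpos : (0 : ℝ) < (n : ℝ) := by linarith
  have hxpos : (0 : ℝ) ≤ xx := by
    rw [hxx]
    apply div_nonneg <;> linarith
  have hnorm : ‖xx‖ < 1 := by
    rw [Real.norm_eq_abs, abs_of_nonneg hxpos, hxx, div_lt_one hnpos]
    linarith
  have h1 := hasSum_choose_mul_geometric_of_norm_lt_one (𝕜 := ℝ) K hnorm
  have h2 := h1.mul_left (((n : ℝ) - 1) * (2 / (n : ℝ)) ^ K)
  have h3 : (fun u : ℕ => (((n : ℝ) - 1) * (2 / (n : ℝ)) ^ K) *
        (((u + K).choose K : ℝ) * xx ^ u))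
      = fun u : ℕ => ((u + K : ℕ) : ℝ) * Phi n K (u + K) := by
    funext u
    have hsplit : u + K = (u + (K - 1)) + 1 := by omega
    have hPhi : Phi n K ((u + (K - 1)) + 1)
        = (((u + (K - 1)).choose (K - 1)) : ℝ) * (2 / (n : ℝ)) ^ K * xx ^ u := by
      show ((u + (K - 1)).choose (K - 1) : ℝ) * (2 / (n : ℝ)) ^ K *
          (((n : ℝ) - 2) / (n : ℝ)) ^ ((u + (K - 1)) - (K - 1)) = _
      rw [Nat.add_sub_cancel, ← hxx]
    have hid : (u + K) * ((u + (K - 1)).choose (K - 1)) = ((u + K).choose K) * K := by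
      have hh := Nat.add_one_mul_choose_eq (u + (K - 1)) (K - 1)
      rw [show (K - 1) + 1 = K from by omega, show u + (K - 1) + 1 = u + K from by omega] at hh
      exact hh
    have hidR : (((u + K).choose K : ℕ) : ℝ) * (K : ℝ)
        = ((u + K : ℕ) : ℝ) * (((u + (K - 1)).choose (K - 1) : ℕ) : ℝ) := by
      exact_mod_cast hid.symm
    calc (((n : ℝ) - 1) * (2 / (n : ℝ)) ^ K) * (((u + K).choose K : ℝ) * xx ^ u)
        = ((((u + K).choose K : ℕ) : ℝ) * (K : ℝ)) * ((2 / (n : ℝ)) ^ K * xx ^ u) := by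
          rw [← hKn]; ring
      _ = ((u + K : ℕ) : ℝ) * ((((u + (K - 1)).choose (K - 1) : ℕ) : ℝ) *
            ((2 / (n : ℝ)) ^ K * xx ^ u)) := by
          rw [hidR]; ring
      _ = ((u + K : ℕ) : ℝ) * Phi n K (u + K) := by
          rw [hsplit, hPhi]; ring
  rw [h3] at h2
  have h4 := (hasSum_nat_add_iff (f := fun t : ℕ => (t : ℝ) * Phi n K t) K).mp h2
  have hzero : ∑ i ∈ Finset.range K, (i : ℝ) * Phi n K i = 0 := by
    refine Finset.sum_eq_zero fun i hi => ?_
    rw [Finset.mem_range] at hi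
    cases i with
    | zero => simp
    | succ j =>
      have hP : Phi n K (j + 1) = 0 := by
        show (j.choose (K - 1) : ℝ) * _ * _ = 0
        rw [Nat.choose_eq_zero_of_lt (by omega)]
        simp
      rw [hP, mul_zero]
  rw [hzero, add_zero] at h4
  have h1x : (1 : ℝ) - xx = 2 / (n : ℝ) := by rw [hxx]; field_simp; ring
  rw [h1x] at h4
  rw [h4.tsum_eq]
  have hq : (2 / (n : ℝ)) ^ K ≠ 0 := pow_ne_zero _ (div_ne_zero two_ne_zero hn0)
  rw [pow_succ]
  rw [← hKn]
  field_simp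

end Final

/-- For `p = 0`, started from a configuration with exactly one defector, the first hitting
time `T` of the all-defect configuration is distributed as the sum of `n-1` independent
geometric(`2/n`) random variables; in particular `E[T] = n(n-1)/2`. -/
theorem rp_defection_time_distribution (n : ℕ) [NeZero n] (hn : 3 ≤ n)
    (S0 : Config n) (hS0 : ∃! i : ZMod n, S0 i = false) :
    (∀ t : ℕ, rpFirstHitAllDefectProb 0 S0 t = geomSumProb n t) ∧
      ∑' t : ℕ, (t : ℝ) * rpFirstHitAllDefectProb 0 S0 t = (n : ℝ) * ((n : ℝ) - 1) / 2 := by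
  constructor
  · intro t
    rw [fh_eq_Phi hn S0 hS0 t]
    exact (geom_eq_Phi hn t).symm
  · have hcong : ∀ t : ℕ, (t : ℝ) * rpFirstHitAllDefectProb 0 S0 t
        = (t : ℝ) * Phi n (n - 1) t := fun t => by rw [fh_eq_Phi hn S0 hS0 t]
    rw [tsum_congr hcong, tsum_Phi hn]
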